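/- Let X be a weakly collectionwise normal space, Y a topological space, (Z, γ, z*) a contractible space, (X_s)_{s∈S} a disjoint locally finite cover of X by functionally ambiguous sets, and for every s ∈ S let g_s : Y → Z be Baire-one. Then the mapping f : X × Y → Z defined by f(x,y) = g_s(y) whenever x ∈ X_s is Baire-one. -/

import Mathlib

open Set Function Filter Topology

universe u

/-- An *equiconnecting* map on `Z`: a map `λ : Z × Z × [0,1] → Z`, continuous on
`Z × Z × [0,1]`, with `λ(x,y,0) = x`, `λ(x,y,1) = y` and `λ(x,x,t) = x`. -/
structure IsEquiconnecting {Z : Type*} [TopologicalSpace Z] (lam : Z → Z → ℝ → Z) : Prop where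
  continuousOn : ContinuousOn (fun p : Z × Z × ℝ => lam p.1 p.2.1 p.2.2)
    (Set.univ ×ˢ Set.univ ×ˢ Set.Icc (0 : ℝ) 1)
  map_zero : ∀ x y : Z, lam x y 0 = x
  map_one : ∀ x y : Z, lam x y 1 = y
  map_diag : ∀ x : Z, ∀ t ∈ Set.Icc (0 : ℝ) 1, lam x x t = x

/-- `lambdaIter lam n` is the map `λ_{n+1} : Z^{n+1} × S_{n+1} → Z` from the paper,
defined recursively. -/
noncomputable def lambdaIter {Z : Type*} (lam : Z → Z → ℝ → Z) :
    (n : ℕ) → (Fin (n + 1) → Z) → (Fin (n + 1) → ℝ) → Z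
  | 0, x, _ => x 0
  | n + 1, x, a =>
      if 0 < a 0 + a 1 then
        lambdaIter lam n
          (Fin.cons (lam (x 0) (x 1) (a 1 / (a 0 + a 1))) fun i => x i.succ.succ)
          (Fin.cons (a 0 + a 1) fun i => a i.succ.succ)
      else
        lambdaIter lam n (fun i => x i.succ) fun i => a i.succ

/-- `lambdaIterSet lam A n` is the set `λ^n(A)`:  `λ^0(A) = A` and
`λ^{n+1}(A) = λ(λ^n(A) × A × [0,1])`. -/
def lambdaIterSet {Z : Type*} (lam : Z → Z → ℝ → Z) (A : Set Z) : ℕ → Set Z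
  | 0 => A
  | n + 1 => (fun p : Z × Z × ℝ => lam p.1 p.2.1 p.2.2) ''
      (lambdaIterSet lam A n ×ˢ A ×ˢ Set.Icc (0 : ℝ) 1)

/-- `λ^∞(A) = ⋃_{n ≥ 1} λ^n(A)`. -/
def lambdaInftySet {Z : Type*} (lam : Z → Z → ℝ → Z) (A : Set Z) : Set Z :=
  ⋃ n : ℕ, lambdaIterSet lam A (n + 1)

/-- An equiconnected space `(Z, λ)` is locally convex if every point has arbitrarily small
neighborhoods `V` with `λ^∞(V)` inside a given neighborhood. -/
def IsLocallyConvexEquiconnected {Z : Type*} [TopologicalSpace Z] (lam : Z → Z → ℝ → Z) :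
    Prop :=
  ∀ z : Z, ∀ U ∈ nhds z, ∃ V ∈ nhds z, lambdaInftySet lam V ⊆ U

/-- A map is Baire-one if it is the pointwise limit of a sequence of continuous maps. -/
def BaireOne {Y Z : Type*} [TopologicalSpace Y] [TopologicalSpace Z] (g : Y → Z) : Prop :=
  ∃ h : ℕ → Y → Z, (∀ n, Continuous (h n)) ∧
    ∀ y, Filter.Tendsto (fun n => h n y) Filter.atTop (nhds (g y))

/-- A locally finite partition of unity on `X`: continuous `[0,1]`-valued functions whose
supports (closures of the sets where they are nonzero) form a locally finite family and whose
pointwise sum is `1`. -/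
def IsLocFinPartitionOfUnity {I X : Type*} [TopologicalSpace X] (φ : I → X → ℝ) : Prop :=
  (∀ i, Continuous (φ i)) ∧ (∀ i x, φ i x ∈ Set.Icc (0 : ℝ) 1) ∧
    (LocallyFinite fun i => closure (Function.support (φ i))) ∧ ∀ x, ∑ᶠ i, φ i x = 1

/-- A strong PP-space: for every dense `D ⊆ X` there are a sequence of locally finite
partitions of unity and families of points of `D` such that points attached to the supports
containing `x` converge to `x` uniformly in the index, in the sense of condition (3). -/
def IsStrongPPSpace (X : Type*) [TopologicalSpace X] : Prop :=
  ∀ D : Set X, Dense D →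
    ∃ (I : ℕ → Type u) (φ : ∀ n, I n → X → ℝ) (p : ∀ n, I n → X),
      (∀ n, IsLocFinPartitionOfUnity (φ n)) ∧ (∀ n i, p n i ∈ D) ∧
      ∀ x : X, ∀ U ∈ nhds x, ∃ n₀ : ℕ, ∀ n ≥ n₀, ∀ i : I n,
        x ∈ closure (Function.support (φ n i)) → p n i ∈ U

/-- A zero set: the preimage of `{0}` under a continuous function `X → [0,1]`. -/
def IsZeroSet {X : Type*} [TopologicalSpace X] (A : Set X) : Prop :=
  ∃ f : X → ℝ, Continuous f ∧ (∀ x, f x ∈ Set.Icc (0 : ℝ) 1) ∧ A = f ⁻¹' {0}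

/-- A cozero set: the preimage of `(0,1]` under a continuous function `X → [0,1]`. -/
def IsCozeroSet {X : Type*} [TopologicalSpace X] (A : Set X) : Prop :=
  ∃ f : X → ℝ, Continuous f ∧ (∀ x, f x ∈ Set.Icc (0 : ℝ) 1) ∧ A = f ⁻¹' Set.Ioc (0 : ℝ) 1

/-- A functionally ambiguous set: simultaneously a countable union of zero sets and a
countable intersection of cozero sets. -/
def IsFunctionallyAmbiguous {X : Type*} [TopologicalSpace X] (A : Set X) : Prop :=
  (∃ F : ℕ → Set X, (∀ n, IsZeroSet (F n)) ∧ A = ⋃ n, F n) ∧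
    ∃ B : ℕ → Set X, (∀ n, IsCozeroSet (B n)) ∧ A = ⋂ n, B n

/-- A discrete family of sets: every point has a neighborhood meeting at most one member. -/
def IsDiscreteFamily {I X : Type*} [TopologicalSpace X] (A : I → Set X) : Prop :=
  ∀ x : X, ∃ U ∈ nhds x, {i : I | (U ∩ A i).Nonempty}.Subsingleton

/-- Weakly collectionwise normal: every discrete family of zero sets can be separated by a
discrete family of cozero sets. -/
def WeaklyCollectionwiseNormal (X : Type*) [TopologicalSpace X] : Prop :=
  ∀ (S : Type u) (F : S → Set X), (∀ s, IsZeroSet (F s)) → IsDiscreteFamily F →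
    ∃ U : S → Set X, (∀ s, IsCozeroSet (U s)) ∧ IsDiscreteFamily U ∧ ∀ s, F s ⊆ U s

/-- A contracting structure on `Z`: a continuous `γ : Z × [0,1] → Z` with `γ(z,0) = z` and
`γ(z,1) = z₀`. -/
structure IsContracting {Z : Type*} [TopologicalSpace Z] (γ : Z → ℝ → Z) (z₀ : Z) :
    Prop where
  continuousOn : ContinuousOn (fun p : Z × ℝ => γ p.1 p.2) (Set.univ ×ˢ Set.Icc (0 : ℝ) 1)
  map_zero : ∀ z : Z, γ z 0 = z
  map_one : ∀ z : Z, γ z 1 = z₀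

/-- Let `X` be weakly collectionwise normal, `(Z, γ, z₀)` a contractible space,
`(X_s)_{s ∈ S}` a disjoint locally finite cover of `X` by functionally ambiguous sets and
`g_s : Y → Z` Baire-one for each `s`.  Then the map `f` with `f(x,y) = g_s(y)` for `x ∈ X_s`
is Baire-one. -/
theorem baireOne_of_ambiguous_cover {X Y Z : Type*} {S : Type u} [TopologicalSpace X]
    [TopologicalSpace Y] [TopologicalSpace Z]
    (hX : WeaklyCollectionwiseNormal.{u} X)
    (γ : Z → ℝ → Z) (z₀ : Z) (hγ : IsContracting γ z₀)
    (A : S → Set X) (hcover : ⋃ s, A s = Set.univ)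
    (hdisj : Pairwise (Function.onFun Disjoint A)) (hlf : LocallyFinite A)
    (hamb : ∀ s, IsFunctionallyAmbiguous (A s))
    (g : S → Y → Z) (hg : ∀ s, BaireOne (g s))
    (f : X × Y → Z) (hf : ∀ (s : S), ∀ x ∈ A s, ∀ y : Y, f (x, y) = g s y) :
    BaireOne f := by
  classical
  choose p pcont pconv using hg
  choose Zk hZkzero hAZ using fun s => (hamb s).1
  choose v vcont vmem hveq using fun s k => hZkzero s k
  set vF : S → ℕ → X → ℝ := fun s n x => ∏ k ∈ Finset.range (n + 1), v s k x with hvF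
  set F : S → ℕ → Set X := fun s n => vF s n ⁻¹' {0} with hFdef
  have vFcont : ∀ s n, Continuous (vF s n) := fun s n =>
    continuous_finset_prod _ fun k _ => vcont s k
  have vFmem : ∀ s n x, vF s n x ∈ Set.Icc (0 : ℝ) 1 := by
    intro s n x
    constructor
    · exact Finset.prod_nonneg fun k _ => (vmem s k x).1
    · exact Finset.prod_le_one (fun k _ => (vmem s k x).1) fun k _ => (vmem s k x).2
  have hFmem : ∀ s n x, x ∈ F s n ↔ ∃ k ∈ Finset.range (n + 1), v s k x = 0 := by
    intro s n x
    simp only [hFdef, Set.mem_preimage, Set.mem_singleton_iff, hvF]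
    exact Finset.prod_eq_zero_iff
  have hFA : ∀ s n, F s n ⊆ A s := by
    intro s n x hx
    obtain ⟨k, -, hk⟩ := (hFmem s n x).1 hx
    have hxZ : x ∈ Zk s k := by rw [hveq s k]; exact hk
    rw [hAZ s]; exact Set.mem_iUnion.2 ⟨k, hxZ⟩
  have hFev : ∀ s x, x ∈ A s → ∃ N, ∀ n ≥ N, x ∈ F s n := by
    intro s x hx
    rw [hAZ s] at hx
    obtain ⟨k, hk⟩ := Set.mem_iUnion.1 hx
    refine ⟨k, fun n hn => (hFmem s n x).2 ⟨k, Finset.mem_range.2 (by omega), ?_⟩⟩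
    have hx' : x ∈ v s k ⁻¹' {0} := (hveq s k) ▸ hk
    exact hx'
  have hFzero : ∀ n s, IsZeroSet (F s n) := fun n s =>
    ⟨vF s n, vFcont s n, vFmem s n, rfl⟩
  have hFclosed : ∀ s n, IsClosed (F s n) :=
    fun s n => isClosed_singleton.preimage (vFcont s n)
  have hex : ∀ x : X, ∃ s, x ∈ A s := fun x =>
    Set.mem_iUnion.1 (hcover ▸ Set.mem_univ x)
  -- discreteness of the zero-set families
  have hFdisc : ∀ n, IsDiscreteFamily fun s => F s n := by
    intro n x
    obtain ⟨s₀, hs₀⟩ := hex x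
    obtain ⟨V, hVx, hVfin⟩ := hlf x
    set T : Finset S := hVfin.toFinset.erase s₀ with hT
    have key : ∀ s : S, ((V ∩ ⋂ t ∈ T, (F t n)ᶜ) ∩ F s n).Nonempty → s = s₀ := by
      rintro s ⟨z, ⟨⟨hzV, hzI⟩, hzF⟩⟩
      by_contra hne
      have hsT : s ∈ T := by
        rw [hT]
        exact Finset.mem_erase.2 ⟨hne, hVfin.mem_toFinset.2 ⟨z, hFA s n hzF, hzV⟩⟩
      exact (Set.mem_iInter₂.1 hzI s hsT) hzF
    refine ⟨V ∩ ⋂ t ∈ T, (F t n)ᶜ, ?_, ?_⟩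
    · refine Filter.inter_mem hVx ?_
      refine ((isOpen_biInter_finset fun t _ => (hFclosed t n).isOpen_compl).mem_nhds ?_)
      refine Set.mem_iInter₂.2 fun t ht => ?_
      have hts : t ≠ s₀ := Finset.ne_of_mem_erase ht
      intro hxF
      exact Set.disjoint_left.1 (hdisj hts) (hFA t n hxF) hs₀
    · intro s hs s' hs'
      rw [key s hs, key s' hs']
  choose U hUcoz hUdisc hUsub using fun n => hX S (fun s => F s n) (hFzero n) (hFdisc n)
  choose u ucont umem hueq using fun n s => hUcoz n s
  have hUuniq : ∀ n (x : X) s s', x ∈ U n s → x ∈ U n s' → s = s' := by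
    intro n x s s' hs hs'
    obtain ⟨W, hWx, hWsub⟩ := hUdisc n x
    exact hWsub ⟨x, mem_of_mem_nhds hWx, hs⟩ ⟨x, mem_of_mem_nhds hWx, hs'⟩
  have hUmem : ∀ n s (x : X), x ∈ U n s ↔ 0 < u n s x := by
    intro n s x
    rw [hueq n s]
    constructor
    · exact fun hx => hx.1
    · exact fun hx => ⟨hx, (umem n s x).2⟩
  have hden : ∀ n s (x : X), 0 < u n s x + vF s n x := by
    intro n s x
    rcases eq_or_lt_of_le (umem n s x).1 with h | h
    · have hxU : x ∉ U n s := by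
        rw [hUmem n s x]; rw [← h]; exact lt_irrefl 0
      have hxF : x ∉ F s n := fun hxF => hxU (hUsub n s hxF)
      have hv0 : vF s n x ≠ 0 := fun h0 => hxF h0
      have := lt_of_le_of_ne (vFmem s n x).1 (Ne.symm hv0)
      linarith
    · linarith [(vFmem s n x).1]
  set a : ℕ → S → X → ℝ := fun n s x => u n s x / (u n s x + vF s n x) with hadef
  have hacont : ∀ n s, Continuous (a n s) := fun n s =>
    (ucont n s).div ((ucont n s).add (vFcont s n)) fun x => (hden n s x).ne'
  have hamem : ∀ n s x, a n s x ∈ Set.Icc (0 : ℝ) 1 := by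
    intro n s x
    constructor
    · exact div_nonneg (umem n s x).1 (hden n s x).le
    · rw [div_le_one (hden n s x)]
      linarith [(vFmem s n x).1]
  have haF : ∀ n s (x : X), x ∈ F s n → a n s x = 1 := by
    intro n s x hx
    have hv : vF s n x = 0 := hx
    have hu : 0 < u n s x := (hUmem n s x).1 (hUsub n s hx)
    simp only [hadef, hv, add_zero]
    exact div_self hu.ne'
  have haU : ∀ n s (x : X), x ∉ U n s → a n s x = 0 := by
    intro n s x hx
    have hu : u n s x = 0 := by
      by_contra hne
      exact hx ((hUmem n s x).2 (lt_of_le_of_ne (umem n s x).1 (Ne.symm hne)))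
    simp only [hadef, hu, zero_div]
  have hGcont : ∀ n s, Continuous fun q : X × Y => γ (p s n q.2) (1 - a n s q.1) := by
    intro n s
    have hmap : Continuous fun q : X × Y => ((p s n q.2, 1 - a n s q.1) : Z × ℝ) :=
      ((pcont s n).comp continuous_snd).prodMk
        (continuous_const.sub ((hacont n s).comp continuous_fst))
    have hmem : ∀ q : X × Y, ((p s n q.2, 1 - a n s q.1) : Z × ℝ) ∈
        Set.univ ×ˢ Set.Icc (0 : ℝ) 1 := by
      intro q
      refine ⟨Set.mem_univ _, ?_, ?_⟩ <;> dsimp only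
      · linarith [(hamem n s q.1).2]
      · linarith [(hamem n s q.1).1]
    simpa [Function.comp_def] using hγ.continuousOn.comp_continuous hmap hmem
  refine ⟨fun n q => if hx : ∃ s, q.1 ∈ U n s then
      γ (p hx.choose n q.2) (1 - a n hx.choose q.1) else z₀, ?_, ?_⟩
  · intro n
    rw [continuous_iff_continuousAt]
    rintro ⟨x₀, y₀⟩
    obtain ⟨V, hVx, hVsub⟩ := hUdisc n x₀
    by_cases hexV : ∃ s, (V ∩ U n s).Nonempty
    · obtain ⟨s₀, hs₀⟩ := hexV
      refine ContinuousAt.congr (hGcont n s₀).continuousAt ?_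
      refine Filter.eventuallyEq_of_mem (prod_mem_nhds hVx Filter.univ_mem) ?_
      rintro ⟨x, y⟩ ⟨hxV, -⟩
      dsimp only
      by_cases hx : ∃ s, x ∈ U n s
      · have h1 : hx.choose = s₀ := hVsub ⟨x, hxV, hx.choose_spec⟩ hs₀
        rw [dif_pos hx, h1]
      · have hxs₀ : x ∉ U n s₀ := fun hc => hx ⟨s₀, hc⟩
        rw [dif_neg hx, haU n s₀ x hxs₀, sub_zero, hγ.map_one]
    · refine ContinuousAt.congr (continuousAt_const (y := z₀)) ?_
      refine Filter.eventuallyEq_of_mem (prod_mem_nhds hVx Filter.univ_mem) ?_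
      rintro ⟨x, y⟩ ⟨hxV, -⟩
      have hx : ¬∃ s, x ∈ U n s := fun ⟨s, hsx⟩ => hexV ⟨s, x, hxV, hsx⟩
      dsimp only
      rw [dif_neg hx]
  · rintro ⟨x, y⟩
    obtain ⟨s₀, hxs₀⟩ := hex x
    rw [hf s₀ x hxs₀ y]
    obtain ⟨N, hN⟩ := hFev s₀ x hxs₀
    have hev : ∀ n ≥ N, (if hx : ∃ s, x ∈ U n s then
        γ (p hx.choose n y) (1 - a n hx.choose x) else z₀) = p s₀ n y := by
      intro n hn
      have hxF := hN n hn
      have hxU : x ∈ U n s₀ := hUsub n s₀ hxF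
      have hx : ∃ s, x ∈ U n s := ⟨s₀, hxU⟩
      have h1 : hx.choose = s₀ := hUuniq n x _ _ hx.choose_spec hxU
      rw [dif_pos hx, h1, haF n s₀ x hxF, sub_self, hγ.map_zero]
    exact Filter.Tendsto.congr'
      (Filter.eventually_atTop.2 ⟨N, fun n hn => (hev n hn).symm⟩) (pconv s₀ y)
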